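/- arXiv:2402.05835 — 6 statements merged into one kernel-verified Lean document; each statement's English description precedes it below -/
import Mathlib

section
/- With g_k(n) = Σ_x p_x^k (1-p_x)^{n-k} and remainder R_{n,k} = C(n,k)·(-1)^{n-k}·Σ_x p_x^{n+1}, the expected total mass satisfies E[M_k] = C(n,k)·Σ_{i=1}^{n-k} (-1)^{i-1} g_{k+i}(n) + R_{n,k}. -/
open Finset MeasureTheory

private lemma count_sum {X : Type*} [Fintype X] [DecidableEq X] (q : X → ℝ) (x : X) :
    ∀ (n k : ℕ),
      (∑ ω : Fin n → X, if (∑ i, if ω i = x then (1:ℕ) else 0) = k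
          then ∏ i, q (ω i) else 0)
        = (n.choose k : ℝ) * q x ^ k * (∑ y ∈ univ.erase x, q y) ^ (n - k) := by
  intro n
  induction n with
  | zero =>
    intro k
    cases k with
    | zero => simp
    | succ k => simp [Nat.choose]
  | succ n ih =>
    intro k
    set r : ℝ := ∑ y ∈ univ.erase x, q y with hr
    have hstep : (∑ ω : Fin (n+1) → X, if (∑ i, if ω i = x then (1:ℕ) else 0) = k
          then ∏ i, q (ω i) else 0)
        = (∑ y : X, ∑ ω : Fin n → X,
            if ((if y = x then (1:ℕ) else 0) + ∑ i, if ω i = x then (1:ℕ) else 0) = k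
            then q y * ∏ i, q (ω i) else 0) := by
      rw [← Equiv.sum_comp (Fin.consEquiv (fun _ : Fin (n+1) => X)), Fintype.sum_prod_type]
      refine Finset.sum_congr rfl fun y _ => Finset.sum_congr rfl fun ω _ => ?_
      have he : ((Fin.consEquiv (fun _ : Fin (n+1) => X)) (y, ω))
          = (Fin.cons y ω : Fin (n+1) → X) := rfl
      rw [he]
      have hc : (∑ i : Fin (n+1), if (Fin.cons y ω : Fin (n+1) → X) i = x then (1:ℕ) else 0)
          = (if y = x then (1:ℕ) else 0) + ∑ i, if ω i = x then (1:ℕ) else 0 := by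
        rw [Fin.sum_univ_succ]
        simp
      have hpr : (∏ i : Fin (n+1), q ((Fin.cons y ω : Fin (n+1) → X) i))
          = q y * ∏ i, q (ω i) := by
        rw [Fin.prod_univ_succ]
        simp
      rw [hc, hpr]
    rw [hstep, ← Finset.sum_erase_add _ _ (Finset.mem_univ x)]
    have h1 : (∑ y ∈ univ.erase x, ∑ ω : Fin n → X,
        if ((if y = x then (1:ℕ) else 0) + ∑ i, if ω i = x then (1:ℕ) else 0) = k
        then q y * ∏ i, q (ω i) else 0)
        = r * ((n.choose k : ℝ) * q x ^ k * r ^ (n - k)) := by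
      rw [← ih k, hr, Finset.sum_mul]
      refine Finset.sum_congr rfl fun y hy => ?_
      have hyx : y ≠ x := (Finset.mem_erase.mp hy).1
      rw [Finset.mul_sum]
      refine Finset.sum_congr rfl fun ω _ => ?_
      simp [hyx, mul_ite]
    have h2 : (∑ ω : Fin n → X,
        if ((if x = x then (1:ℕ) else 0) + ∑ i, if ω i = x then (1:ℕ) else 0) = k
        then q x * ∏ i, q (ω i) else 0)
        = if k = 0 then 0 else q x * ((n.choose (k-1) : ℝ) * q x ^ (k-1) * r ^ (n - (k-1))) := by
      cases k with
      | zero => simp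
      | succ k =>
        simp only [if_pos rfl, Nat.succ_ne_zero, if_false, Nat.add_sub_cancel]
        rw [← ih k, Finset.mul_sum]
        refine Finset.sum_congr rfl fun ω _ => ?_
        simp [add_comm 1, mul_ite]
    rw [h1, h2]
    cases k with
    | zero => simp [Nat.sub_zero, pow_succ, mul_comm]
    | succ k =>
      simp only [Nat.succ_ne_zero, if_false, Nat.add_sub_cancel, Nat.succ_sub_succ,
        Nat.sub_zero]
      rw [Nat.choose_succ_succ]
      push_cast
      rcases le_or_gt (k+1) n with h | h
      · have hx : n - k = (n - (k+1)) + 1 := by omega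
        rw [hx]
        ring
      · have hc1 : n.choose (k+1) = 0 := Nat.choose_eq_zero_of_lt h
        have hc2 : n - (k+1) = 0 := by omega
        rw [hc1, hc2]
        push_cast
        ring

private lemma alt_sum (q : ℝ) (m : ℕ) :
    (1 - q) ^ m = (∑ j ∈ range m, (-q) ^ j * (1 - q) ^ (m - 1 - j)) + (-q) ^ m := by
  have h := geom_sum₂_mul (-q) (1 - q) m
  have hd : (-q) - (1 - q) = -1 := by ring
  rw [hd] at h
  nlinarith [h]

/-- With `g k n = ∑ x, p x ^ k * (1 - p x) ^ (n - k)` and remainder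
`R = C(n,k) * (-1)^(n-k) * ∑ x, p x ^ (n+1)`, the expected total mass satisfies
`E[M_k] = C(n,k) * ∑_{i=1}^{n-k} (-1)^(i-1) g (k+i) n + R`. -/
theorem expected_total_mass_alternating {X : Type*} [Fintype X] [DecidableEq X]
    [MeasurableSpace X] [MeasurableSingletonClass X]
    (n k : ℕ) (hk : k ≤ n)
    (μX : Measure X) [IsProbabilityMeasure μX]
    (p : X → ℝ) (hp : ∀ x, (μX {x}).toReal = p x) :
    (∫ ω, (∑ x, if (∑ i, if ω i = x then 1 else 0 : ℕ) = k then p x else 0)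
        ∂(Measure.pi fun _ : Fin n => μX))
      = (n.choose k : ℝ) *
          (∑ i ∈ Finset.Icc 1 (n - k),
            (-1 : ℝ) ^ (i - 1) * ∑ x, p x ^ (k + i) * (1 - p x) ^ (n - (k + i)))
        + (n.choose k : ℝ) * (-1 : ℝ) ^ (n - k) * ∑ x, p x ^ (n + 1) := by
  -- Step 1: singleton measure of product
  have hsing : ∀ ω : Fin n → X, ((Measure.pi fun _ : Fin n => μX) {ω}).toReal
      = ∏ i, p (ω i) := by
    intro ω
    rw [← Set.univ_pi_singleton ω, Measure.pi_pi, ENNReal.toReal_prod]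
    exact Finset.prod_congr rfl fun i _ => hp (ω i)
  -- Step 2: sum of p x = 1
  have hsum : ∑ x : X, p x = 1 := by
    have h1 : μX Set.univ = ∑ x : X, μX {x} := by
      have hu : (Set.univ : Set X) = ⋃ x ∈ (univ : Finset X), ({x} : Set X) := by
        ext y; simp
      rw [hu, measure_biUnion_finset]
      · intro a _ b _ hab
        simp [Function.onFun, Set.disjoint_singleton, hab]
      · intro b _; exact measurableSet_singleton b
    have h2 := congrArg ENNReal.toReal h1
    rw [measure_univ, ENNReal.toReal_sum (fun x _ => measure_ne_top μX _)] at h2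
    simp only [hp] at h2
    exact h2.symm
  -- Step 3: compute integral
  have hint : (∫ ω, (∑ x, if (∑ i, if ω i = x then 1 else 0 : ℕ) = k then p x else 0)
        ∂(Measure.pi fun _ : Fin n => μX))
      = ∑ x : X, (n.choose k : ℝ) * p x ^ (k+1) * (1 - p x) ^ (n - k) := by
    rw [integral_fintype Integrable.of_finite]
    simp only [smul_eq_mul, Measure.real, hsing, Finset.mul_sum]
    rw [Finset.sum_comm]
    refine Finset.sum_congr rfl fun x _ => ?_
    have hcs := count_sum p x n k
    have herase : ∑ y ∈ univ.erase x, p y = 1 - p x := by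
      have := Finset.sum_erase_add univ p (Finset.mem_univ x)
      rw [hsum] at this
      linarith
    rw [herase] at hcs
    calc ∑ ω : Fin n → X, (∏ i, p (ω i)) *
            (if (∑ i, if ω i = x then 1 else 0 : ℕ) = k then p x else 0)
        = p x * ∑ ω : Fin n → X, (if (∑ i, if ω i = x then (1:ℕ) else 0) = k
            then ∏ i, p (ω i) else 0) := by
          rw [Finset.mul_sum]
          refine Finset.sum_congr rfl fun ω _ => ?_
          by_cases h : (∑ i, if ω i = x then (1:ℕ) else 0) = k <;> simp [h, mul_comm]
      _ = p x * ((n.choose k : ℝ) * p x ^ k * (1 - p x) ^ (n - k)) := by rw [hcs]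
      _ = (n.choose k : ℝ) * p x ^ (k+1) * (1 - p x) ^ (n - k) := by ring
  rw [hint]
  -- Step 4: algebraic identity
  set m := n - k with hm
  have key : ∀ q : ℝ, q ^ (k+1) * (1 - q) ^ m
      = (∑ i ∈ Finset.Icc 1 m, (-1:ℝ) ^ (i-1) * (q ^ (k+i) * (1-q) ^ (n - (k+i))))
        + (-1:ℝ) ^ m * q ^ (n+1) := by
    intro q
    have hIcc : (∑ i ∈ Finset.Icc 1 m, (-1:ℝ) ^ (i-1) * (q ^ (k+i) * (1-q) ^ (n - (k+i))))
        = ∑ j ∈ range m, (-1:ℝ) ^ j * (q ^ (k+j+1) * (1-q) ^ (n - (k+j+1))) := by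
      rw [show Finset.Icc 1 m = Finset.Ico 1 (m+1) by rfl, Finset.sum_Ico_eq_sum_range]
      simp only [Nat.add_sub_cancel]
      refine Finset.sum_congr rfl fun j _ => ?_
      have e1 : 1 + j - 1 = j := by omega
      have e2 : k + (1 + j) = k + j + 1 := by omega
      rw [e1, e2]
    rw [hIcc]
    have hq : ∀ j ∈ range m, (-1:ℝ) ^ j * (q ^ (k+j+1) * (1-q) ^ (n - (k+j+1)))
        = q^(k+1) * ((-q)^j * (1-q)^(m-1-j)) := by
      intro j hj
      have he : n - (k + j + 1) = m - 1 - j := by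
        have := Finset.mem_range.mp hj; omega
      rw [he, neg_pow, pow_add, pow_add]
      ring
    rw [Finset.sum_congr rfl hq, ← Finset.mul_sum]
    have hend : (-1:ℝ) ^ m * q ^ (n+1) = q^(k+1) * (-q)^m := by
      rw [neg_pow, show n + 1 = (k+1) + m by omega, pow_add]
      ring
    rw [hend, ← mul_add, ← alt_sum q m]
  calc ∑ x : X, (n.choose k : ℝ) * p x ^ (k+1) * (1 - p x) ^ m
      = ∑ x : X, ((∑ i ∈ Finset.Icc 1 m,
            (n.choose k : ℝ) * ((-1:ℝ)^(i-1) * (p x ^ (k+i) * (1 - p x) ^ (n - (k+i)))))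
          + (n.choose k : ℝ) * ((-1:ℝ)^m * p x ^ (n+1))) := by
        refine Finset.sum_congr rfl fun x _ => ?_
        rw [← Finset.mul_sum, ← mul_add, ← key (p x)]
        ring
    _ = (∑ x : X, ∑ i ∈ Finset.Icc 1 m,
            (n.choose k : ℝ) * ((-1:ℝ)^(i-1) * (p x ^ (k+i) * (1 - p x) ^ (n - (k+i)))))
          + ∑ x : X, (n.choose k : ℝ) * ((-1:ℝ)^m * p x ^ (n+1)) := Finset.sum_add_distrib
    _ = (∑ i ∈ Finset.Icc 1 m, ∑ x : X,
            (n.choose k : ℝ) * ((-1:ℝ)^(i-1) * (p x ^ (k+i) * (1 - p x) ^ (n - (k+i)))))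
          + ∑ x : X, (n.choose k : ℝ) * ((-1:ℝ)^m * p x ^ (n+1)) := by rw [Finset.sum_comm]
    _ = (n.choose k : ℝ) *
          (∑ i ∈ Finset.Icc 1 m,
            (-1 : ℝ) ^ (i - 1) * ∑ x, p x ^ (k + i) * (1 - p x) ^ (n - (k + i)))
        + (n.choose k : ℝ) * (-1 : ℝ) ^ m * ∑ x, p x ^ (n + 1) := by
        congr 1
        · rw [Finset.mul_sum]
          refine Finset.sum_congr rfl fun i _ => ?_
          rw [Finset.mul_sum, Finset.mul_sum]
        · rw [Finset.mul_sum]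
          exact Finset.sum_congr rfl fun x _ => by ring
end

section
/- For the expected missing mass: E[M₀] = Σ_{k=1}^{n} (-1)^{k-1} g_k(n) + (-1)^n Σ_x p_x^{n+1}, where g_k(n) = Σ_x p_x^k (1-p_x)^{n-k}. -/
open Finset MeasureTheory

lemma alg_identity (p : ℝ) : ∀ n : ℕ,
    (∑ k ∈ Finset.Icc 1 n, (-1 : ℝ) ^ (k - 1) * (p ^ k * (1 - p) ^ (n - k)))
      + (-1 : ℝ) ^ n * p ^ (n + 1) = p * (1 - p) ^ n := by
  intro n
  induction n with
  | zero => simp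
  | succ n ih =>
    have hstep : ∀ k ∈ Finset.Icc 1 n,
        (-1 : ℝ) ^ (k - 1) * (p ^ k * (1 - p) ^ (n + 1 - k))
          = (1 - p) * ((-1 : ℝ) ^ (k - 1) * (p ^ k * (1 - p) ^ (n - k))) := by
      intro k hk
      obtain ⟨hk1, hkn⟩ := Finset.mem_Icc.mp hk
      have : n + 1 - k = (n - k) + 1 := by omega
      rw [this, pow_succ]
      ring
    rw [show Finset.Icc 1 (n + 1) = insert (n + 1) (Finset.Icc 1 n) by
        ext k; simp [Finset.mem_Icc]; omega,
      Finset.sum_insert (by simp), Finset.sum_congr rfl hstep, ← Finset.mul_sum]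
    have h2 : (∑ k ∈ Finset.Icc 1 n, (-1 : ℝ) ^ (k - 1) * (p ^ k * (1 - p) ^ (n - k)))
        = p * (1 - p) ^ n - (-1 : ℝ) ^ n * p ^ (n + 1) := by linarith [ih]
    rw [h2]
    simp only [Nat.add_sub_cancel, Nat.sub_self, pow_zero, pow_succ]
    ring

/-- For the expected missing mass `M₀ = ∑ x, p x * 1[N x = 0]`:
`E[M₀] = ∑_{k=1}^{n} (-1)^(k-1) g k n + (-1)^n * ∑ x, p x ^ (n+1)`,
where `g k n = ∑ x, p x ^ k * (1 - p x) ^ (n - k)`. -/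
theorem expected_missing_mass {X : Type*} [Fintype X] [DecidableEq X]
    [MeasurableSpace X] [MeasurableSingletonClass X]
    (n : ℕ)
    (μX : Measure X) [IsProbabilityMeasure μX]
    (p : X → ℝ) (hp : ∀ x, (μX {x}).toReal = p x) :
    (∫ ω, (∑ x, if (∑ i, if ω i = x then 1 else 0 : ℕ) = 0 then p x else 0)
        ∂(Measure.pi fun _ : Fin n => μX))
      = (∑ k ∈ Finset.Icc 1 n,
          (-1 : ℝ) ^ (k - 1) * ∑ x, p x ^ k * (1 - p x) ^ (n - k))
        + (-1 : ℝ) ^ n * ∑ x, p x ^ (n + 1) := by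
  have key : ∀ x : X,
      (∫ ω, (if (∑ i, if ω i = x then 1 else 0 : ℕ) = 0 then p x else 0)
        ∂(Measure.pi fun _ : Fin n => μX)) = p x * (1 - p x) ^ n := by
    intro x
    have hSeq : {ω : Fin n → X | (∑ i, if ω i = x then 1 else 0 : ℕ) = 0}
        = Set.pi Set.univ (fun _ : Fin n => ({x}ᶜ : Set X)) := by
      ext ω
      simp [Finset.sum_eq_zero_iff, Set.mem_pi, Finset.filter_eq_empty_iff]
    have hS : MeasurableSet {ω : Fin n → X | (∑ i, if ω i = x then 1 else 0 : ℕ) = 0} := by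
      rw [hSeq]
      exact MeasurableSet.univ_pi fun _ => (measurableSet_singleton x).compl
    have hmeas : ((Measure.pi fun _ : Fin n => μX)
        {ω : Fin n → X | (∑ i, if ω i = x then 1 else 0 : ℕ) = 0})
        = (μX ({x}ᶜ)) ^ n := by
      rw [hSeq, Measure.pi_pi]
      simp
    have hcompl : (μX ({x}ᶜ)).toReal = 1 - p x := by
      rw [prob_compl_eq_one_sub (measurableSet_singleton x), ENNReal.toReal_sub_of_le
        prob_le_one (by simp), hp]
      simp
    calc (∫ ω, (if (∑ i, if ω i = x then 1 else 0 : ℕ) = 0 then p x else 0)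
          ∂(Measure.pi fun _ : Fin n => μX))
        = ∫ ω, Set.indicator {ω : Fin n → X | (∑ i, if ω i = x then 1 else 0 : ℕ) = 0}
            (fun _ => p x) ω ∂(Measure.pi fun _ : Fin n => μX) := by
          congr 1; ext ω; rw [Set.indicator_apply]; simp only [Set.mem_setOf_eq]
      _ = ((Measure.pi fun _ : Fin n => μX)
            {ω : Fin n → X | (∑ i, if ω i = x then 1 else 0 : ℕ) = 0}).toReal • p x := by
          rw [integral_indicator_const _ hS]; rfl
      _ = p x * (1 - p x) ^ n := by
          rw [hmeas, ENNReal.toReal_pow, hcompl, smul_eq_mul, mul_comm]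
  have hint : ∀ x : X, Integrable
      (fun ω : Fin n → X => (if (∑ i, if ω i = x then 1 else 0 : ℕ) = 0 then p x else 0))
      (Measure.pi fun _ : Fin n => μX) := by
    intro x
    have hS : MeasurableSet {ω : Fin n → X | (∑ i, if ω i = x then 1 else 0 : ℕ) = 0} := by
      have : {ω : Fin n → X | (∑ i, if ω i = x then 1 else 0 : ℕ) = 0}
          = Set.pi Set.univ (fun _ : Fin n => ({x}ᶜ : Set X)) := by
        ext ω; simp [Finset.sum_eq_zero_iff, Set.mem_pi, Finset.filter_eq_empty_iff]
      rw [this]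
      exact MeasurableSet.univ_pi fun _ => (measurableSet_singleton x).compl
    have : (fun ω : Fin n → X => (if (∑ i, if ω i = x then 1 else 0 : ℕ) = 0 then p x else 0))
        = Set.indicator {ω : Fin n → X | (∑ i, if ω i = x then 1 else 0 : ℕ) = 0}
          (fun _ => p x) := by
      ext ω; rw [Set.indicator_apply]; simp only [Set.mem_setOf_eq]
    rw [this]
    exact (integrable_const _).indicator hS
  rw [integral_finset_sum _ (fun x _ => hint x)]
  simp only [key]
  simp only [Finset.mul_sum]
  rw [Finset.sum_comm, ← Finset.sum_add_distrib]
  exact Finset.sum_congr rfl fun x _ => (alg_identity (p x) n).symm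
end

section
/- The Good–Turing identity: E[M_k] = ((k+1)/(n+1))·f_{k+1}(n+1), where f_{k+1}(n+1) = C(n+1,k+1)·Σ_x p_x^{k+1}(1-p_x)^{n-k}. -/
open Finset MeasureTheory

set_option linter.unusedSectionVars false

section aux
variable {X : Type*} [Fintype X] [DecidableEq X]
    [MeasurableSpace X] [MeasurableSingletonClass X]

noncomputable def gt_g {n : ℕ} (x : X) (s : Finset (Fin n)) (i : Fin n) (y : X) : ℝ :=
  if i ∈ s then (if y = x then 1 else 0) else (if y = x then 0 else 1)

lemma gt_g_meas {n : ℕ} (x : X) (s : Finset (Fin n)) (i : Fin n) :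
    Measurable (gt_g x s i) := by
  unfold gt_g
  by_cases h : i ∈ s <;> simp [h] <;>
    exact Measurable.ite (MeasurableSet.singleton x) measurable_const measurable_const

lemma gt_g_bound {n : ℕ} (x : X) (s : Finset (Fin n)) (i : Fin n) (y : X) :
    0 ≤ gt_g x s i y ∧ gt_g x s i y ≤ 1 := by
  unfold gt_g; split_ifs <;> norm_num

lemma gt_point {n k : ℕ} (x : X) (ω : Fin n → X) :
    (if (∑ i, if ω i = x then 1 else 0 : ℕ) = k then (1:ℝ) else 0)
      = ∑ s ∈ powersetCard k (univ : Finset (Fin n)), ∏ i, gt_g x s i (ω i) := by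
  have hprod : ∀ s : Finset (Fin n), (∏ i, gt_g x s i (ω i))
      = if s = univ.filter (fun i => ω i = x) then (1:ℝ) else 0 := by
    intro s
    split_ifs with hs
    · apply Finset.prod_eq_one
      intro i _
      subst hs
      unfold gt_g
      by_cases h : ω i = x <;> simp [h]
    · obtain ⟨i, hi⟩ : ∃ i, ¬ (i ∈ s ↔ ω i = x) := by
        by_contra hall
        push_neg at hall
        exact hs (Finset.ext fun i => by simp [hall i])
      apply Finset.prod_eq_zero (Finset.mem_univ i)
      unfold gt_g
      by_cases h1 : i ∈ s <;> by_cases h2 : ω i = x <;> simp_all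
  simp_rw [hprod]
  rw [Finset.sum_ite_eq' (powersetCard k (univ : Finset (Fin n)))]
  have hcard : (∑ i, if ω i = x then 1 else 0 : ℕ)
      = (univ.filter (fun i => ω i = x)).card := by
    simp [Finset.sum_boole]
  rw [hcard]
  simp [Finset.mem_powersetCard_univ]

end aux

section aux2
variable {X : Type*} [Fintype X] [DecidableEq X]
    [MeasurableSpace X] [MeasurableSingletonClass X]

lemma gt_ind_int (μX : Measure X) [IsProbabilityMeasure μX]
    (p : X → ℝ) (hp : ∀ x, (μX {x}).toReal = p x) (x : X) :
    ∫ y, (if y = x then (1:ℝ) else 0) ∂μX = p x := by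
  have he : (fun y => if y = x then (1:ℝ) else 0) = Set.indicator {x} (fun _ => 1) := by
    ext y; simp [Set.indicator_apply]
  rw [he, integral_indicator_const _ (MeasurableSet.singleton x), measureReal_def, hp x]; simp

lemma gt_ind_integrable (μX : Measure X) [IsProbabilityMeasure μX] (x : X) :
    Integrable (fun y => if y = x then (1:ℝ) else 0) μX := by
  have he : (fun y => if y = x then (1:ℝ) else 0) = Set.indicator {x} (fun _ => 1) := by
    ext y; simp [Set.indicator_apply]
  rw [he]
  exact (integrable_indicator_iff (MeasurableSet.singleton x)).2
    (integrableOn_const (measure_lt_top _ _).ne)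

lemma gt_g_integral {n : ℕ} (μX : Measure X) [IsProbabilityMeasure μX]
    (p : X → ℝ) (hp : ∀ x, (μX {x}).toReal = p x)
    (x : X) (s : Finset (Fin n)) (i : Fin n) :
    ∫ y, gt_g x s i y ∂μX = if i ∈ s then p x else 1 - p x := by
  unfold gt_g
  by_cases h : i ∈ s <;> simp only [h, if_true, if_false]
  · exact gt_ind_int μX p hp x
  · have he : (fun y => if y = x then (0:ℝ) else 1)
        = fun y => 1 - (if y = x then (1:ℝ) else 0) := by
      ext y; split_ifs <;> ring
    rw [show (∫ y, (if y = x then (0:ℝ) else 1) ∂μX)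
        = ∫ y, (1 - if y = x then (1:ℝ) else 0) ∂μX from by rw [← he],
      integral_sub (integrable_const 1) (gt_ind_integrable μX x),
      gt_ind_int μX p hp x]
    simp
end aux2

/-- The Good–Turing identity: `E[M_k] = ((k+1)/(n+1)) * f (k+1) (n+1)`, where
`f (k+1) (n+1) = C(n+1, k+1) * ∑ x, p x ^ (k+1) * (1 - p x) ^ (n-k)`. -/
theorem good_turing_identity {X : Type*} [Fintype X] [DecidableEq X]
    [MeasurableSpace X] [MeasurableSingletonClass X]
    (n k : ℕ) (hk : k ≤ n)
    (μX : Measure X) [IsProbabilityMeasure μX]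
    (p : X → ℝ) (hp : ∀ x, (μX {x}).toReal = p x) :
    (∫ ω, (∑ x, if (∑ i, if ω i = x then 1 else 0 : ℕ) = k then p x else 0)
        ∂(Measure.pi fun _ : Fin n => μX))
      = ((k + 1 : ℝ) / (n + 1)) *
          (((n + 1).choose (k + 1) : ℝ) *
            ∑ x, p x ^ (k + 1) * (1 - p x) ^ (n - k)) := by
  have hrw : ∀ ω : Fin n → X,
      (∑ x, if (∑ i, if ω i = x then 1 else 0 : ℕ) = k then p x else 0)
        = ∑ x, ∑ s ∈ powersetCard k (univ : Finset (Fin n)),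
            p x * ∏ i, gt_g x s i (ω i) := by
    intro ω
    refine Finset.sum_congr rfl fun x _ => ?_
    rw [← Finset.mul_sum, ← gt_point]
    split_ifs <;> ring
  simp_rw [hrw]
  have hintterm : ∀ (x : X) (s : Finset (Fin n)),
      Integrable (fun ω : Fin n → X => p x * ∏ i, gt_g x s i (ω i))
        (Measure.pi fun _ : Fin n => μX) := by
    intro x s
    apply Integrable.const_mul
    have hmeas : Measurable fun ω : Fin n → X => ∏ i, gt_g x s i (ω i) :=
      Finset.measurable_prod _ fun i _ => (gt_g_meas x s i).comp (measurable_pi_apply i)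
    refine (integrable_const (1:ℝ)).mono' hmeas.aestronglyMeasurable ?_
    filter_upwards with ω
    rw [Real.norm_eq_abs,
      abs_of_nonneg (Finset.prod_nonneg fun i _ => (gt_g_bound x s i (ω i)).1)]
    exact Finset.prod_le_one (fun i _ => (gt_g_bound x s i (ω i)).1)
      (fun i _ => (gt_g_bound x s i (ω i)).2)
  rw [integral_finset_sum _ fun x _ => integrable_finset_sum _ fun s _ => hintterm x s]
  have hprodint : ∀ (x : X) (s : Finset (Fin n)), s ∈ powersetCard k (univ : Finset (Fin n)) →
      (∫ ω, (p x * ∏ i, gt_g x s i (ω i)) ∂(Measure.pi fun _ : Fin n => μX))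
        = p x * (p x ^ k * (1 - p x) ^ (n - k)) := by
    intro x s hs
    rw [integral_const_mul]
    congr 1
    letI : MeasureSpace X := ⟨μX⟩
    have hvol : (Measure.pi fun _ : Fin n => μX) = (volume : Measure (Fin n → X)) :=
      (MeasureTheory.volume_pi).symm
    rw [hvol]
    rw [← hvol, MeasureTheory.integral_fintype_prod_eq_prod (ι := Fin n) (fun i y => gt_g x s i y)]
    have hcard : s.card = k := (Finset.mem_powersetCard_univ.1 hs)
    simp_rw [show ∀ i, (∫ y, gt_g x s i y ∂μX) = if i ∈ s then p x else 1 - p x from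
      fun i => gt_g_integral μX p hp x s i]
    rw [Finset.prod_ite, Finset.prod_const, Finset.prod_const]
    congr 1
    · congr 1
      rw [show (univ.filter (· ∈ s)) = s from by simp, hcard]
    · congr 1
      rw [show (univ.filter (· ∉ s)) = sᶜ from by ext i; simp]
      rw [Finset.card_compl, hcard, Fintype.card_fin]
  calc ∑ x, ∫ ω, (∑ s ∈ powersetCard k (univ : Finset (Fin n)),
          p x * ∏ i, gt_g x s i (ω i)) ∂(Measure.pi fun _ : Fin n => μX)
      = ∑ x : X, ((n.choose k : ℝ) * (p x ^ (k+1) * (1 - p x) ^ (n - k))) := by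
        refine Finset.sum_congr rfl fun x _ => ?_
        rw [integral_finset_sum _ fun s _ => hintterm x s]
        rw [Finset.sum_congr rfl (hprodint x), Finset.sum_const,
          Finset.card_powersetCard, Finset.card_univ, Fintype.card_fin, nsmul_eq_mul]
        ring
    _ = ((k + 1 : ℝ) / (n + 1)) * (((n + 1).choose (k + 1) : ℝ)
          * ∑ x, p x ^ (k + 1) * (1 - p x) ^ (n - k)) := by
        rw [← Finset.mul_sum, ← mul_assoc]
        congr 1
        have h0 := Nat.add_one_mul_choose_eq n k
        have hc : ((n:ℝ)+1) * (n.choose k : ℝ)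
            = ((n + 1).choose (k + 1) : ℝ) * ((k:ℝ)+1) := by exact_mod_cast h0
        rw [div_mul_eq_mul_div, eq_comm, div_eq_iff (by positivity : ((n:ℝ)+1) ≠ 0)]
        linarith [hc]
end

section
/- The bias of the modified Good–Turing estimator M̂_k^{G'} = ((k+1)/(n-k))·Φ_{k+1} equals Σ_x C(n,k)·p_x^{k+2}(1-p_x)^{n-k-1}, and hence is at least C(n,k)·p_min^{k+2}(1-p_min)^{n-k-1} where p_min = min_x p_x. -/
open Finset MeasureTheory


section
variable {X : Type*} [Fintype X] [DecidableEq X] [MeasurableSpace X] [MeasurableSingletonClass X]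

lemma meas_N (n : ℕ) (x : X) :
    Measurable (fun ω : Fin n → X => (∑ j, if ω j = x then 1 else 0 : ℕ)) := by
  apply Finset.measurable_sum
  intro j _
  have h1 : MeasurableSet {ω : Fin n → X | ω j = x} := by
    have : {ω : Fin n → X | ω j = x} = (fun ω : Fin n → X => ω j) ⁻¹' {x} := rfl
    rw [this]; exact (measurable_pi_apply j) (measurableSet_singleton x)
  exact Measurable.ite h1 measurable_const measurable_const

omit [Fintype X] [MeasurableSpace X] [MeasurableSingletonClass X] in
lemma set_eq (n m : ℕ) (x : X) :
    {ω : Fin n → X | (∑ j, if ω j = x then 1 else 0 : ℕ) = m}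
      = ⋃ s ∈ Finset.powersetCard m (Finset.univ : Finset (Fin n)),
          Set.pi Set.univ (fun j => if j ∈ s then ({x} : Set X) else {x}ᶜ) := by
  ext ω
  simp only [Set.mem_setOf_eq, Set.mem_iUnion, Finset.mem_powersetCard, Set.mem_pi,
    Set.mem_univ, true_implies, Finset.sum_boole]
  constructor
  · intro h
    refine ⟨Finset.univ.filter (fun j => ω j = x), ⟨Finset.subset_univ _, by exact_mod_cast h⟩, ?_⟩
    intro j
    by_cases hj : ω j = x <;> simp [hj]
  · rintro ⟨s, ⟨-, hcard⟩, h⟩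
    have : Finset.univ.filter (fun j => ω j = x) = s := by
      ext j
      specialize h j
      by_cases hj : j ∈ s <;> simp [hj] at h <;> simp [hj, h]
    rw [this] at *
    exact_mod_cast hcard

lemma pi_count (μ : Measure X) [IsProbabilityMeasure μ] (n m : ℕ) (x : X) :
    (Measure.pi fun _ : Fin n => μ) {ω | (∑ j, if ω j = x then 1 else 0 : ℕ) = m}
      = (n.choose m) * μ {x} ^ m * μ ({x}ᶜ) ^ (n - m) := by
  rw [set_eq]
  rw [measure_biUnion_finset]
  · have hval : ∀ s ∈ Finset.powersetCard m (Finset.univ : Finset (Fin n)),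
        (Measure.pi fun _ : Fin n => μ)
          (Set.pi Set.univ (fun j => if j ∈ s then ({x} : Set X) else {x}ᶜ))
        = μ {x} ^ m * μ ({x}ᶜ) ^ (n - m) := by
      intro s hs
      rw [Finset.mem_powersetCard_univ] at hs
      rw [Measure.pi_pi]
      rw [← Finset.prod_sdiff (Finset.subset_univ s)]
      rw [Finset.prod_congr rfl (fun j hj => by
          simp only [Finset.mem_sdiff] at hj; rw [if_neg hj.2]),
        Finset.prod_congr (rfl : s = s) (fun j hj => by rw [if_pos hj])]
      simp [Finset.prod_const, hs, Finset.card_univ_diff]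
      ring
    rw [Finset.sum_congr rfl hval, Finset.sum_const, Finset.card_powersetCard,
      Finset.card_univ, Fintype.card_fin]
    simp [mul_comm, mul_assoc, nsmul_eq_mul]
  · intro s hs t ht hst
    simp only [Function.onFun, Set.disjoint_left]
    intro ω hω1 hω2
    apply hst
    simp only [Set.mem_pi, Set.mem_univ, true_implies] at hω1 hω2
    ext j
    specialize hω1 j; specialize hω2 j
    constructor <;> intro hj
    · simp [hj] at hω1
      by_contra hjt
      simp [hjt] at hω2
      exact hω2 hω1
    · simp [hj] at hω2
      by_contra hjs
      simp [hjs] at hω1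
      exact hω1 hω2
  · intro s hs
    exact MeasurableSet.univ_pi (fun j => by
      by_cases hj : j ∈ s <;> simp [hj, (measurableSet_singleton x), (measurableSet_singleton x).compl])
end

section
variable {X : Type*} [Fintype X] [DecidableEq X] [MeasurableSpace X] [MeasurableSingletonClass X]

lemma meas_set (n m : ℕ) (x : X) :
    MeasurableSet {ω : Fin n → X | (∑ j, if ω j = x then 1 else 0 : ℕ) = m} :=
  meas_N n x (measurableSet_singleton m)

lemma integral_ind (μ : Measure X) [IsProbabilityMeasure μ] (n m : ℕ) (x : X) :
    ∫ ω, (if (∑ j, if ω j = x then 1 else 0 : ℕ) = m then (1:ℝ) else 0)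
        ∂(Measure.pi fun _ : Fin n => μ)
      = (n.choose m) * (μ {x}).toReal ^ m * (1 - (μ {x}).toReal) ^ (n - m) := by
  have heq : (fun ω : Fin n → X => (if (∑ j, if ω j = x then 1 else 0 : ℕ) = m then (1:ℝ) else 0))
      = Set.indicator {ω : Fin n → X | (∑ j, if ω j = x then 1 else 0 : ℕ) = m} 1 := by
    ext ω
    by_cases h : (∑ j, if ω j = x then 1 else 0 : ℕ) = m <;>
      simp only [Set.indicator_apply, Set.mem_setOf_eq, h, if_true, if_false, Pi.one_apply]
  rw [heq, MeasureTheory.integral_indicator_one (meas_set n m x), measureReal_def, pi_count]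
  have hcompl : μ ({x}ᶜ) = 1 - μ {x} := prob_compl_eq_one_sub (measurableSet_singleton x)
  rw [hcompl]
  rw [ENNReal.toReal_mul, ENNReal.toReal_mul, ENNReal.toReal_pow, ENNReal.toReal_pow,
    ENNReal.toReal_sub_of_le prob_le_one ENNReal.one_ne_top, ENNReal.toReal_one]
  norm_num

lemma integrable_ind (μ : Measure X) [IsProbabilityMeasure μ] (n m : ℕ) (x : X) (c : ℝ) :
    Integrable (fun ω : Fin n → X =>
      (if (∑ j, if ω j = x then 1 else 0 : ℕ) = m then c else 0))
      (Measure.pi fun _ : Fin n => μ) := by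
  have heq : (fun ω : Fin n → X => (if (∑ j, if ω j = x then 1 else 0 : ℕ) = m then c else 0))
      = Set.indicator {ω : Fin n → X | (∑ j, if ω j = x then 1 else 0 : ℕ) = m} (fun _ => c) := by
    ext ω
    by_cases h : (∑ j, if ω j = x then 1 else 0 : ℕ) = m <;>
      simp only [Set.indicator_apply, Set.mem_setOf_eq, h, if_true, if_false]
  rw [heq]
  exact (integrable_const c).indicator (meas_set n m x)
end

lemma alg_aux (k m : ℕ) (A B c p : ℝ) (hcA : c * A = B) :
    c * (A * p^(k+1) * (1-p)^m) - p * (B * p^k * (1-p)^(m+1)) = B * p^(k+2) * (1-p)^m := by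
  linear_combination (p^(k+1) * (1-p)^m) * hcA


/-- The bias of the modified Good–Turing estimator
`M̂_k^{G'} = ((k+1)/(n-k)) * Φ_(k+1)` equals
`∑ x, C(n,k) * p x ^ (k+2) * (1 - p x) ^ (n-k-1)`, and hence is at least
`C(n,k) * pmin^(k+2) * (1 - pmin)^(n-k-1)` where `pmin = min_x p x`. -/
theorem modified_good_turing_bias {X : Type*} [Fintype X] [DecidableEq X]
    [MeasurableSpace X] [MeasurableSingletonClass X]
    (n k : ℕ) (hk : k < n)
    (μX : Measure X) [IsProbabilityMeasure μX]
    (p : X → ℝ) (hp : ∀ x, (μX {x}).toReal = p x)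
    (hpos : ∀ x, 0 < p x)
    (pmin : ℝ) (hmin : ∀ x, pmin ≤ p x) (hex : ∃ x, p x = pmin) :
    (∫ ω, (((k : ℝ) + 1) / ((n : ℝ) - k) *
          (∑ x, if (∑ j, if ω j = x then 1 else 0 : ℕ) = k + 1 then 1 else 0 : ℝ))
        ∂(Measure.pi fun _ : Fin n => μX))
      - (∫ ω, (∑ x, if (∑ j, if ω j = x then 1 else 0 : ℕ) = k then p x else 0)
          ∂(Measure.pi fun _ : Fin n => μX))
      = ∑ x, (n.choose k : ℝ) * p x ^ (k + 2) * (1 - p x) ^ (n - k - 1) ∧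
    (n.choose k : ℝ) * pmin ^ (k + 2) * (1 - pmin) ^ (n - k - 1)
      ≤ ∑ x, (n.choose k : ℝ) * p x ^ (k + 2) * (1 - p x) ^ (n - k - 1) := by
  have hle : ∀ x, p x ≤ 1 := by
    intro x
    rw [← hp x]
    exact ENNReal.toReal_le_of_le_ofReal zero_le_one (by simpa using prob_le_one)
  have hnk : ((n : ℝ) - k) ≠ 0 := by
    have : (k : ℝ) < n := by exact_mod_cast hk
    linarith
  have key : ((k : ℝ) + 1) / ((n : ℝ) - k) * (n.choose (k+1)) = (n.choose k) := by
    have hch := Nat.choose_succ_right_eq n k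
    have hc : ((n.choose (k+1) : ℝ)) * ((k : ℝ) + 1) = (n.choose k) * ((n : ℝ) - k) := by
      have h2 : ((n - k : ℕ) : ℝ) = (n : ℝ) - k := by
        rw [Nat.cast_sub hk.le]
      calc ((n.choose (k+1) : ℝ)) * ((k : ℝ) + 1)
          = ((n.choose (k+1) * (k+1) : ℕ) : ℝ) := by push_cast; ring
        _ = ((n.choose k * (n - k) : ℕ) : ℝ) := by rw [hch]
        _ = (n.choose k) * ((n : ℝ) - k) := by push_cast [hk.le]; ring
    rw [div_mul_eq_mul_div, div_eq_iff hnk]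
    linarith [hc]
  constructor
  · rw [MeasureTheory.integral_const_mul,
      MeasureTheory.integral_finset_sum _ (fun x _ => integrable_ind μX n (k+1) x 1),
      MeasureTheory.integral_finset_sum _ (fun x _ => integrable_ind μX n k x (p x)),
      Finset.mul_sum, ← Finset.sum_sub_distrib]
    apply Finset.sum_congr rfl
    intro x _
    have h1 := integral_ind μX n (k+1) x
    have h2 : ∫ ω, (if (∑ j, if ω j = x then 1 else 0 : ℕ) = k then p x else 0)
        ∂(Measure.pi fun _ : Fin n => μX)
        = p x * ((n.choose k) * p x ^ k * (1 - p x) ^ (n - k)) := by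
      have : (fun ω : Fin n → X => (if (∑ j, if ω j = x then 1 else 0 : ℕ) = k then p x else 0))
          = fun ω => p x * (if (∑ j, if ω j = x then 1 else 0 : ℕ) = k then (1:ℝ) else 0) := by
        ext ω; by_cases h : (∑ j, if ω j = x then 1 else 0 : ℕ) = k <;> simp [h]
      rw [this, MeasureTheory.integral_const_mul, integral_ind, hp]
    have e1 : n - (k + 1) = n - k - 1 := by omega
    have e2 : n - k = (n - k - 1) + 1 := by omega
    rw [e1, hp] at h1
    rw [e2] at h2
    rw [h2, h1]
    exact alg_aux k (n - k - 1) _ _ _ _ key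
  · obtain ⟨x0, hx0⟩ := hex
    rw [← hx0]
    apply Finset.single_le_sum
      (f := fun x => (n.choose k : ℝ) * p x ^ (k + 2) * (1 - p x) ^ (n - k - 1))
    · intro x _
      have h1 : (0:ℝ) ≤ 1 - p x := by linarith [hle x]
      exact mul_nonneg (mul_nonneg (by positivity) (pow_nonneg (hpos x).le _))
        (pow_nonneg h1 _)
    · exact Finset.mem_univ x0
end

section
/- The bias of the Good–Turing estimator M̂_k^G = ((k+1)/n)·Φ_{k+1} equals Σ_x C(n,k)·p_x^{k+2}(1-p_x)^{n-k-1}·(1 - k/(n·p_x)). -/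
open Finset MeasureTheory

lemma gt_key {X : Type*} [Fintype X] [DecidableEq X] (p : X → ℝ) (x : X) (n : ℕ) :
    ∀ m : ℕ, ∑ ω : Fin n → X,
        (if (∑ j, if ω j = x then 1 else 0 : ℕ) = m then (1:ℝ) else 0) * ∏ j, p (ω j)
      = (n.choose m : ℝ) * p x ^ m * (∑ y ∈ univ.erase x, p y) ^ (n - m) := by
  induction n with
  | zero =>
    intro m
    cases m with
    | zero => simp
    | succ m => simp [Nat.choose_eq_zero_of_lt]
  | succ n ih =>
    intro m
    have hsum : (∑ ω : Fin (n+1) → X,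
        (if (∑ j, if ω j = x then 1 else 0 : ℕ) = m then (1:ℝ) else 0) * ∏ j, p (ω j))
      = ∑ a : X, ∑ g : Fin n → X,
        (if ((if a = x then 1 else 0) + ∑ j, if g j = x then 1 else 0 : ℕ) = m then (1:ℝ) else 0)
          * (p a * ∏ j, p (g j)) := by
      set F : (Fin (n+1) → X) → ℝ := fun ω =>
        (if (∑ j, if ω j = x then 1 else 0 : ℕ) = m then (1:ℝ) else 0) * ∏ j, p (ω j) with hF
      calc ∑ ω, F ω = ∑ ag : X × (Fin n → X), F ((Fin.consEquiv fun _ => X) ag) :=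
              ((Fin.consEquiv fun _ : Fin (n+1) => X).sum_comp F).symm
        _ = ∑ a : X, ∑ g : Fin n → X, F ((Fin.consEquiv fun _ => X) (a, g)) :=
              Fintype.sum_prod_type _
        _ = _ := by
              refine Finset.sum_congr rfl fun a _ => Finset.sum_congr rfl fun g _ => ?_
              simp only [hF, Fin.consEquiv, Equiv.coe_fn_mk, Fin.sum_univ_succ, Fin.prod_univ_succ,
                Fin.cons_zero, Fin.cons_succ]
    rw [hsum]
    rw [← Finset.add_sum_erase _ _ (Finset.mem_univ x)]
    simp only [eq_self_iff_true, if_true]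
    cases m with
    | zero =>
      have h1 : ∑ g : Fin n → X,
          (if (1 + ∑ j, if g j = x then 1 else 0 : ℕ) = 0 then (1:ℝ) else 0)
            * (p x * ∏ j, p (g j)) = 0 := by
        apply Finset.sum_eq_zero; intro g _; simp
      rw [h1, zero_add]
      have h2 : ∀ a ∈ univ.erase x, ∑ g : Fin n → X,
          (if ((if a = x then 1 else 0) + ∑ j, if g j = x then 1 else 0 : ℕ) = 0 then (1:ℝ) else 0)
            * (p a * ∏ j, p (g j))
          = p a * ((n.choose 0 : ℝ) * p x ^ 0 * (∑ y ∈ univ.erase x, p y) ^ (n - 0)) := by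
        intro a ha
        simp only [if_neg (Finset.ne_of_mem_erase ha), zero_add]
        rw [← ih 0, Finset.mul_sum]
        exact Finset.sum_congr rfl fun g _ => by ring
      rw [Finset.sum_congr rfl h2, ← Finset.sum_mul]
      simp only [Nat.choose_zero_right, Nat.cast_one, pow_zero, Nat.sub_zero]
      ring
    | succ m =>
      have h1 : ∑ g : Fin n → X,
          (if (1 + ∑ j, if g j = x then 1 else 0 : ℕ) = m + 1 then (1:ℝ) else 0)
            * (p x * ∏ j, p (g j))
          = p x * ((n.choose m : ℝ) * p x ^ m * (∑ y ∈ univ.erase x, p y) ^ (n - m)) := by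
        rw [← ih m, Finset.mul_sum]
        refine Finset.sum_congr rfl fun g _ => ?_
        have h : ((1 + ∑ j, if g j = x then 1 else 0 : ℕ) = m + 1) ↔
            ((∑ j, if g j = x then 1 else 0 : ℕ) = m) := by omega
        simp only [h]; ring
      have h2 : ∀ a ∈ univ.erase x, ∑ g : Fin n → X,
          (if ((if a = x then 1 else 0) + ∑ j, if g j = x then 1 else 0 : ℕ) = m + 1 then (1:ℝ) else 0)
            * (p a * ∏ j, p (g j))
          = p a * ((n.choose (m+1) : ℝ) * p x ^ (m+1) * (∑ y ∈ univ.erase x, p y) ^ (n - (m+1))) := by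
        intro a ha
        simp only [if_neg (Finset.ne_of_mem_erase ha), zero_add]
        rw [← ih (m+1), Finset.mul_sum]
        exact Finset.sum_congr rfl fun g _ => by ring
      rw [h1, Finset.sum_congr rfl h2, ← Finset.sum_mul]
      rw [Nat.succ_sub_succ]
      rw [Nat.choose_succ_succ n m]
      push_cast
      rcases le_or_gt (m + 1) n with h | h
      · have he : n - m = (n - (m+1)) + 1 := by omega
        rw [he, pow_succ]
        ring
      · have h0 : n.choose (m+1) = 0 := Nat.choose_eq_zero_of_lt h
        rw [h0]
        push_cast
        ring

/-- The bias of the Good–Turing estimator `M̂_k^G = ((k+1)/n) * Φ_(k+1)` equals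
`∑ x, C(n,k) * p x ^ (k+2) * (1 - p x) ^ (n-k-1) * (1 - k/(n * p x))`. -/
theorem good_turing_bias {X : Type*} [Fintype X] [DecidableEq X]
    [MeasurableSpace X] [MeasurableSingletonClass X]
    (n k : ℕ) (hk1 : 1 ≤ k) (hk : k < n)
    (μX : Measure X) [IsProbabilityMeasure μX]
    (p : X → ℝ) (hp : ∀ x, (μX {x}).toReal = p x)
    (hpos : ∀ x, 0 < p x) :
    (∫ ω, (((k : ℝ) + 1) / (n : ℝ) *
          (∑ x, if (∑ j, if ω j = x then 1 else 0 : ℕ) = k + 1 then 1 else 0 : ℝ))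
        ∂(Measure.pi fun _ : Fin n => μX))
      - (∫ ω, (∑ x, if (∑ j, if ω j = x then 1 else 0 : ℕ) = k then p x else 0)
          ∂(Measure.pi fun _ : Fin n => μX))
      = ∑ x, (n.choose k : ℝ) * p x ^ (k + 2) * (1 - p x) ^ (n - k - 1) *
          (1 - (k : ℝ) / ((n : ℝ) * p x)) := by
  classical
  set μ : Measure (Fin n → X) := Measure.pi fun _ : Fin n => μX with hμ
  have hw : ∀ ω : Fin n → X, (μ {ω}).toReal = ∏ j, p (ω j) := by
    intro ω
    rw [hμ, ← Set.univ_pi_singleton, Measure.pi_pi, ENNReal.toReal_prod]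
    exact Finset.prod_congr rfl fun j _ => hp (ω j)
  have hpsum : ∑ y, p y = 1 := by
    have h1 := integral_fintype (μ := μX) (f := fun _ : X => (1:ℝ)) (Integrable.of_finite)
    simp only [integral_const, Measure.real, measure_univ, ENNReal.toReal_one, one_smul, smul_eq_mul,
      mul_one] at h1
    exact (Finset.sum_congr rfl fun y _ => (hp y).symm).trans h1.symm
  have hq : ∀ x : X, ∑ y ∈ univ.erase x, p y = 1 - p x := by
    intro x
    have h := Finset.add_sum_erase univ p (Finset.mem_univ x)
    rw [hpsum] at h
    linarith
  rw [integral_fintype Integrable.of_finite, integral_fintype Integrable.of_finite]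
  simp only [smul_eq_mul, Measure.real, hw]
  have e1 : (∑ ω : Fin n → X, (∏ j, p (ω j)) * (((k:ℝ)+1)/(n:ℝ) *
        ∑ x, if (∑ j, if ω j = x then 1 else 0 : ℕ) = k+1 then (1:ℝ) else 0))
      = ∑ x : X, ((k:ℝ)+1)/(n:ℝ) *
          ((n.choose (k+1) : ℝ) * p x ^ (k+1) * (∑ y ∈ univ.erase x, p y) ^ (n - (k+1))) := by
    have step : ∀ ω : Fin n → X, (∏ j, p (ω j)) * (((k:ℝ)+1)/(n:ℝ) *
          ∑ x, if (∑ j, if ω j = x then 1 else 0 : ℕ) = k+1 then (1:ℝ) else 0)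
        = ∑ x, ((k:ℝ)+1)/(n:ℝ) *
            ((if (∑ j, if ω j = x then 1 else 0 : ℕ) = k+1 then (1:ℝ) else 0) * ∏ j, p (ω j)) := by
      intro ω
      simp only [Finset.mul_sum]
      exact Finset.sum_congr rfl fun x _ => by ring
    rw [Finset.sum_congr rfl fun ω _ => step ω, Finset.sum_comm]
    refine Finset.sum_congr rfl fun x _ => ?_
    rw [← Finset.mul_sum, gt_key p x n (k+1)]
  have e2 : (∑ ω : Fin n → X, (∏ j, p (ω j)) *
        ∑ x, if (∑ j, if ω j = x then 1 else 0 : ℕ) = k then p x else 0)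
      = ∑ x : X, p x * ((n.choose k : ℝ) * p x ^ k * (∑ y ∈ univ.erase x, p y) ^ (n - k)) := by
    have step : ∀ ω : Fin n → X, ((∏ j, p (ω j)) *
          ∑ x, if (∑ j, if ω j = x then 1 else 0 : ℕ) = k then p x else 0)
        = ∑ x, p x *
            ((if (∑ j, if ω j = x then 1 else 0 : ℕ) = k then (1:ℝ) else 0) * ∏ j, p (ω j)) := by
      intro ω
      rw [Finset.mul_sum]
      refine Finset.sum_congr rfl fun x _ => ?_
      split_ifs <;> ring
    rw [Finset.sum_congr rfl fun ω _ => step ω, Finset.sum_comm]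
    refine Finset.sum_congr rfl fun x _ => ?_
    rw [← Finset.mul_sum, gt_key p x n k]
  rw [e1, e2, ← Finset.sum_sub_distrib]
  refine Finset.sum_congr rfl fun x _ => ?_
  rw [hq x]
  have hpx := hpos x
  have hn : (0:ℝ) < (n:ℝ) := by exact_mod_cast Nat.pos_of_ne_zero (by omega)
  have hcc : ((n.choose (k+1)) : ℝ) * ((k:ℝ)+1) = (n.choose k : ℝ) * ((n:ℝ) - k) := by
    have h := Nat.choose_succ_right_eq n k
    have h2 := congrArg (fun t : ℕ => (t : ℝ)) h
    push_cast [Nat.cast_sub hk.le] at h2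
    linarith
  have hnk : n - k = (n - k - 1) + 1 := by omega
  have hnk2 : n - (k+1) = n - k - 1 := by omega
  rw [hnk2, hnk, pow_succ]
  field_simp
  rw [Nat.add_sub_cancel]
  linear_combination (p x ^ 2 * p x ^ k * (1 - p x) ^ (n - k - 1)) * hcc
end

section
/- For Φ_i = Σ_x 1[N_x = i] from a multinomial sample of size n: if 2i ≤ n, then E[Φ_i²] = f_i(n) + Σ_{x≠y} (n!/(i!²(n-2i)!))·p_x^i p_y^i (1-p_x-p_y)^{n-2i}; if 2i > n, then E[Φ_i²] = f_i(n). Consequently Var(Φ_i) = E[Φ_i²] - f_i(n)². -/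
open Finset MeasureTheory ProbabilityTheory

section Aux

variable {X : Type*} [Fintype X] [DecidableEq X]

private lemma sm_M_pascal (n i k : ℕ) :
    (n+1).choose (i+1) * ((n - i).choose (k+1))
      = n.choose i * (n-i).choose (k+1) + n.choose (i+1) * (n-i-1).choose k
        + n.choose (i+1) * (n-i-1).choose (k+1) := by
  rcases lt_or_ge i n with h | h
  · obtain ⟨a, h1, h2⟩ : ∃ a, n - i = a + 1 ∧ n - i - 1 = a := ⟨n - i - 1, by omega, rfl⟩
    rw [h2, h1, Nat.choose_succ_succ (n := n) (k := i),
      Nat.choose_succ_succ (n := a) (k := k)]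
    ring
  · have h1 : n - i = 0 := by omega
    have h2 : n - i - 1 = 0 := by omega
    have h3 : n.choose (i+1) = 0 := Nat.choose_eq_zero_of_lt (by omega)
    simp [h1, h2, h3]

private lemma sm_split_cons (n : ℕ) (f : (Fin (n+1) → X) → ℝ) :
    ∑ ω : Fin (n+1) → X, f ω = ∑ x₀ : X, ∑ ω : Fin n → X, f (Fin.cons x₀ ω) := by
  rw [← Equiv.sum_comp (Fin.consEquiv fun _ => X) f, Fintype.sum_prod_type]
  rfl

private lemma sm_A (p : X → ℝ) (x : X) :
    ∀ (n i : ℕ),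
      ∑ ω : Fin n → X,
          (if (∑ j, if ω j = x then 1 else 0 : ℕ) = i then (1:ℝ) else 0) * ∏ j, p (ω j)
        = (n.choose i : ℝ) * p x ^ i * (∑ y ∈ univ.erase x, p y) ^ (n - i) := by
  intro n
  induction n with
  | zero =>
    intro i
    match i with
    | 0 => simp
    | (i+1) => simp
  | succ n ih =>
    intro i
    rw [sm_split_cons]
    have key : ∀ x₀ : X, ∑ ω : Fin n → X,
        (if (∑ j, if (Fin.cons x₀ ω : Fin (n+1) → X) j = x then 1 else 0 : ℕ) = i then (1:ℝ) else 0)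
          * ∏ j, p ((Fin.cons x₀ ω : Fin (n+1) → X) j)
        = p x₀ * ∑ ω : Fin n → X,
            (if ((if x₀ = x then 1 else 0) + ∑ j, if ω j = x then 1 else 0 : ℕ) = i
              then (1:ℝ) else 0) * ∏ j, p (ω j) := by
      intro x₀
      rw [Finset.mul_sum]
      refine Finset.sum_congr rfl fun ω _ => ?_
      simp only [Fin.sum_univ_succ, Fin.prod_univ_succ, Fin.cons_zero, Fin.cons_succ]
      ring
    simp only [key]
    rw [← Finset.add_sum_erase (univ) _ (mem_univ x)]
    simp only [eq_self_iff_true, if_true]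
    set q : ℝ := ∑ y ∈ univ.erase x, p y with hq
    have hrest : ∑ x₀ ∈ univ.erase x, (p x₀ * ∑ ω : Fin n → X,
        (if ((if x₀ = x then 1 else 0) + ∑ j, if ω j = x then 1 else 0 : ℕ) = i
          then (1:ℝ) else 0) * ∏ j, p (ω j))
        = q * ((n.choose i : ℝ) * p x ^ i * q ^ (n - i)) := by
      rw [hq, Finset.sum_mul]
      refine Finset.sum_congr rfl fun x₀ hx₀ => ?_
      have hne : x₀ ≠ x := Finset.ne_of_mem_erase hx₀
      simp only [if_neg hne, zero_add, ih i, hq]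
    rw [hrest]
    match i with
    | 0 =>
      have : ∀ ω : Fin n → X, (if (1 + (∑ j, if ω j = x then 1 else 0 : ℕ) = 0)
          then (1:ℝ) else 0) = 0 := fun ω => if_neg (by omega)
      simp only [this, zero_mul, Finset.sum_const_zero, mul_zero, zero_add]
      simp [pow_succ, ih 0]
      ring
    | (i+1) =>
      have hcond : ∀ ω : Fin n → X,
          ((1 + (∑ j, if ω j = x then 1 else 0 : ℕ) = i + 1)
            ↔ ((∑ j, if ω j = x then 1 else 0 : ℕ) = i)) := by intro ω; omega
      simp only [hcond, ih]
      rcases lt_trichotomy i n with h | h | h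
      · have h1 : n - i = (n - (i+1)) + 1 := by omega
        have h2 : n + 1 - (i + 1) = (n - (i+1)) + 1 := by omega
        rw [h1, h2, Nat.choose_succ_succ']
        push_cast
        ring
      · subst h
        simp [Nat.choose_succ_self, Nat.choose_self, pow_succ]
        ring
      · have h1 : (n.choose i : ℝ) = 0 := by
          norm_cast; exact Nat.choose_eq_zero_of_lt h
        have h2 : (n.choose (i+1) : ℝ) = 0 := by
          norm_cast; exact Nat.choose_eq_zero_of_lt (by omega)
        have h3 : ((n+1).choose (i+1) : ℝ) = 0 := by
          norm_cast; exact Nat.choose_eq_zero_of_lt (by omega)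
        rw [h1, h2, h3]; ring

private lemma sm_B (p : X → ℝ) {x y : X} (hxy : y ≠ x) :
    ∀ (n i k : ℕ),
      ∑ ω : Fin n → X,
          (if (∑ j, if ω j = x then 1 else 0 : ℕ) = i then (1:ℝ) else 0)
            * (if (∑ j, if ω j = y then 1 else 0 : ℕ) = k then (1:ℝ) else 0)
            * ∏ j, p (ω j)
        = (n.choose i : ℝ) * ((n-i).choose k : ℝ) * p x ^ i * p y ^ k
            * (∑ z ∈ (univ.erase x).erase y, p z) ^ (n - i - k) := by
  intro n
  induction n with
  | zero =>
    intro i k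
    match i, k with
    | 0, 0 => simp
    | 0, (k+1) => simp
    | (i+1), 0 => simp
    | (i+1), (k+1) => simp
  | succ n ih =>
    intro i k
    rw [sm_split_cons]
    have key : ∀ x₀ : X, ∑ ω : Fin n → X,
        (if (∑ j, if (Fin.cons x₀ ω : Fin (n+1) → X) j = x then 1 else 0 : ℕ) = i
            then (1:ℝ) else 0)
          * (if (∑ j, if (Fin.cons x₀ ω : Fin (n+1) → X) j = y then 1 else 0 : ℕ) = k
            then (1:ℝ) else 0)
          * ∏ j, p ((Fin.cons x₀ ω : Fin (n+1) → X) j)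
        = p x₀ * ∑ ω : Fin n → X,
            (if ((if x₀ = x then 1 else 0) + ∑ j, if ω j = x then 1 else 0 : ℕ) = i
              then (1:ℝ) else 0)
            * (if ((if x₀ = y then 1 else 0) + ∑ j, if ω j = y then 1 else 0 : ℕ) = k
              then (1:ℝ) else 0)
            * ∏ j, p (ω j) := by
      intro x₀
      rw [Finset.mul_sum]
      refine Finset.sum_congr rfl fun ω _ => ?_
      simp only [Fin.sum_univ_succ, Fin.prod_univ_succ, Fin.cons_zero, Fin.cons_succ]
      ring
    simp only [key]
    rw [← Finset.add_sum_erase (univ) _ (mem_univ x),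
      ← Finset.add_sum_erase (univ.erase x) _ (mem_erase.2 ⟨hxy, mem_univ y⟩)]
    have hxy' : ¬ (x = y) := fun h => hxy h.symm
    simp only [eq_self_iff_true, if_true, if_neg hxy, if_neg hxy', zero_add]
    set r : ℝ := ∑ z ∈ (univ.erase x).erase y, p z with hr
    have hrest : ∑ z ∈ (univ.erase x).erase y, (p z * ∑ ω : Fin n → X,
        (if ((if z = x then 1 else 0) + ∑ j, if ω j = x then 1 else 0 : ℕ) = i
          then (1:ℝ) else 0)
        * (if ((if z = y then 1 else 0) + ∑ j, if ω j = y then 1 else 0 : ℕ) = k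
          then (1:ℝ) else 0)
        * ∏ j, p (ω j))
        = r * ((n.choose i : ℝ) * ((n-i).choose k : ℝ) * p x ^ i * p y ^ k
            * r ^ (n - i - k)) := by
      rw [hr, Finset.sum_mul]
      refine Finset.sum_congr rfl fun z hz => ?_
      have hzy : z ≠ y := (Finset.mem_erase.1 hz).1
      have hzx : z ≠ x := (Finset.mem_erase.1 ((Finset.mem_erase.1 hz).2)).1
      simp only [if_neg hzx, if_neg hzy, zero_add, ih i k, hr]
    rw [hrest]
    have hz : ∀ a b c d : ℕ, (a < b ∨ c < d) → (a.choose b : ℝ) * (c.choose d : ℝ) = 0 := by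
      rintro a b c d (h | h) <;>
        simp [Nat.choose_eq_zero_of_lt h]
    match i, k with
    | 0, 0 =>
      have e1 : ∀ ω : Fin n → X,
          (if (1 + ∑ j, if ω j = x then 1 else 0 : ℕ) = 0 then (1:ℝ) else 0) = 0 :=
        fun ω => if_neg (by omega)
      have e2 : ∀ ω : Fin n → X,
          (if (1 + ∑ j, if ω j = y then 1 else 0 : ℕ) = 0 then (1:ℝ) else 0) = 0 :=
        fun ω => if_neg (by omega)
      simp only [e1, e2, zero_mul, mul_zero, zero_add, Finset.sum_const_zero]
      simp [pow_succ]
      ring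
    | 0, (k+1) =>
      have e1 : ∀ ω : Fin n → X,
          (if (1 + ∑ j, if ω j = x then 1 else 0 : ℕ) = 0 then (1:ℝ) else 0) = 0 :=
        fun ω => if_neg (by omega)
      have hcond : ∀ ω : Fin n → X,
          ((1 + (∑ j, if ω j = y then 1 else 0 : ℕ) = k + 1)
            ↔ ((∑ j, if ω j = y then 1 else 0 : ℕ) = k)) := by intro ω; omega
      simp only [e1, zero_mul, Finset.sum_const_zero, mul_zero, zero_add, hcond, ih]
      simp only [Nat.choose_zero_right, Nat.sub_zero, Nat.cast_one, one_mul, pow_zero]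
      rcases lt_trichotomy k n with h | h | h
      · have h1 : n - k = (n - (k+1)) + 1 := by omega
        have h2 : n + 1 - (k + 1) = (n - (k+1)) + 1 := by omega
        rw [h1, h2, Nat.choose_succ_succ (n := n) (k := k)]
        push_cast
        ring
      · subst h
        simp [Nat.choose_succ_self, Nat.choose_self, pow_succ]
        ring
      · have h1 : (n.choose k : ℝ) = 0 := by
          norm_cast; exact Nat.choose_eq_zero_of_lt h
        have h2 : (n.choose (k+1) : ℝ) = 0 := by
          norm_cast; exact Nat.choose_eq_zero_of_lt (by omega)
        have h3 : ((n+1).choose (k+1) : ℝ) = 0 := by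
          norm_cast; exact Nat.choose_eq_zero_of_lt (by omega)
        rw [h1, h2, h3]; ring
    | (i+1), 0 =>
      have e2 : ∀ ω : Fin n → X,
          (if (1 + ∑ j, if ω j = y then 1 else 0 : ℕ) = 0 then (1:ℝ) else 0) = 0 :=
        fun ω => if_neg (by omega)
      have hcond : ∀ ω : Fin n → X,
          ((1 + (∑ j, if ω j = x then 1 else 0 : ℕ) = i + 1)
            ↔ ((∑ j, if ω j = x then 1 else 0 : ℕ) = i)) := by intro ω; omega
      simp only [e2, mul_zero, zero_mul, Finset.sum_const_zero, add_zero, zero_add, hcond, ih]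
      simp only [Nat.choose_zero_right, Nat.cast_one, mul_one, pow_zero, Nat.sub_zero]
      rcases lt_trichotomy i n with h | h | h
      · have h1 : n - i = (n - (i+1)) + 1 := by omega
        have h2 : n + 1 - (i + 1) = (n - (i+1)) + 1 := by omega
        rw [h1, h2, Nat.choose_succ_succ (n := n) (k := i)]
        push_cast
        ring
      · subst h
        simp [Nat.choose_succ_self, Nat.choose_self, pow_succ]
        ring
      · have h1 : (n.choose i : ℝ) = 0 := by
          norm_cast; exact Nat.choose_eq_zero_of_lt h
        have h2 : (n.choose (i+1) : ℝ) = 0 := by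
          norm_cast; exact Nat.choose_eq_zero_of_lt (by omega)
        have h3 : ((n+1).choose (i+1) : ℝ) = 0 := by
          norm_cast; exact Nat.choose_eq_zero_of_lt (by omega)
        rw [h1, h2, h3]; ring
    | (i+1), (k+1) =>
      have hcondx : ∀ ω : Fin n → X,
          ((1 + (∑ j, if ω j = x then 1 else 0 : ℕ) = i + 1)
            ↔ ((∑ j, if ω j = x then 1 else 0 : ℕ) = i)) := by intro ω; omega
      have hcondy : ∀ ω : Fin n → X,
          ((1 + (∑ j, if ω j = y then 1 else 0 : ℕ) = k + 1)
            ↔ ((∑ j, if ω j = y then 1 else 0 : ℕ) = k)) := by intro ω; omega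
      simp only [hcondx, hcondy, ih]
      have hsub1 : n + 1 - (i + 1) = n - i := by omega
      have hsub2 : n - (i + 1) = n - i - 1 := by omega
      rw [hsub1, hsub2]
      rcases lt_or_ge (i + k + 1) n with h | h
      · set m := n - i - k - 2 with hm
        have e1 : n - i - (k+1) = m + 1 := by omega
        have e2 : n - i - 1 - k = m + 1 := by omega
        have e3 : n - i - 1 - (k+1) = m := by omega
        rw [e1, e2, e3]
        have hcast : ((n+1).choose (i+1) * ((n - i).choose (k+1)) : ℝ)
            = (n.choose i : ℝ) * ((n-i).choose (k+1) : ℝ)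
              + (n.choose (i+1) : ℝ) * ((n-i-1).choose k : ℝ)
              + (n.choose (i+1) : ℝ) * ((n-i-1).choose (k+1) : ℝ) := by
          exact_mod_cast congrArg (Nat.cast : ℕ → ℝ) (sm_M_pascal n i k)
        rw [hcast]
        ring
      · rcases eq_or_lt_of_le h with h' | h'
        · have e1 : n - i - (k+1) = 0 := by omega
          have e2 : n - i - 1 - k = 0 := by omega
          have e3 : n - i - 1 - (k+1) = 0 := by omega
          have z3 : (n.choose (i+1) : ℝ) * ((n-i-1).choose (k+1) : ℝ) = 0 :=
            hz _ _ _ _ (by omega)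
          have hcast : ((n+1).choose (i+1) * ((n - i).choose (k+1)) : ℝ)
              = (n.choose i : ℝ) * ((n-i).choose (k+1) : ℝ)
                + (n.choose (i+1) : ℝ) * ((n-i-1).choose k : ℝ)
                + (n.choose (i+1) : ℝ) * ((n-i-1).choose (k+1) : ℝ) := by
            exact_mod_cast congrArg (Nat.cast : ℕ → ℝ) (sm_M_pascal n i k)
          rw [e1, e2, e3, hcast, z3]
          ring
        · have z1 : (n.choose i : ℝ) * ((n-i).choose (k+1) : ℝ) = 0 :=
            hz _ _ _ _ (by omega)
          have z2 : (n.choose (i+1) : ℝ) * ((n-i-1).choose k : ℝ) = 0 :=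
            hz _ _ _ _ (by omega)
          have z3 : (n.choose (i+1) : ℝ) * ((n-i-1).choose (k+1) : ℝ) = 0 :=
            hz _ _ _ _ (by omega)
          have z4 : ((n+1).choose (i+1) : ℝ) * ((n-i).choose (k+1) : ℝ) = 0 :=
            hz _ _ _ _ (by omega)
          rw [z1, z2, z3, z4]
          ring

end Aux

/-- For `Φ_i = ∑ x, 1[N x = i]` from a multinomial sample of size `n`:
if `2i ≤ n` then
`E[Φ_i²] = f_i(n) + ∑_{x≠y} (n!/(i!²(n-2i)!)) p_x^i p_y^i (1-p_x-p_y)^(n-2i)`;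
if `2i > n` then `E[Φ_i²] = f_i(n)`, where `f_i(n) = C(n,i) ∑ x p_x^i (1-p_x)^(n-i)`.
Consequently `Var(Φ_i) = E[Φ_i²] - f_i(n)²`. -/
theorem second_moment_phi {X : Type*} [Fintype X] [DecidableEq X]
    [MeasurableSpace X] [MeasurableSingletonClass X]
    (n i : ℕ) (hi1 : 1 ≤ i) (hin : i ≤ n)
    (μX : Measure X) [IsProbabilityMeasure μX]
    (p : X → ℝ) (hp : ∀ x, (μX {x}).toReal = p x) :
    (2 * i ≤ n →
      (∫ ω, ((∑ x, if (∑ j, if ω j = x then 1 else 0 : ℕ) = i then 1 else 0 : ℝ) ^ 2)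
          ∂(Measure.pi fun _ : Fin n => μX))
        = (n.choose i : ℝ) * (∑ x, p x ^ i * (1 - p x) ^ (n - i))
          + ∑ x, ∑ y ∈ Finset.univ.erase x,
              ((n.factorial : ℝ) / ((i.factorial : ℝ) ^ 2 * ((n - 2 * i).factorial : ℝ)))
                * p x ^ i * p y ^ i * (1 - p x - p y) ^ (n - 2 * i)) ∧
    (n < 2 * i →
      (∫ ω, ((∑ x, if (∑ j, if ω j = x then 1 else 0 : ℕ) = i then 1 else 0 : ℝ) ^ 2)
          ∂(Measure.pi fun _ : Fin n => μX))
        = (n.choose i : ℝ) * (∑ x, p x ^ i * (1 - p x) ^ (n - i))) ∧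
    variance
        (fun ω => (∑ x, if (∑ j, if ω j = x then 1 else 0 : ℕ) = i then (1 : ℝ) else 0))
        (Measure.pi fun _ : Fin n => μX)
      = (∫ ω, ((∑ x, if (∑ j, if ω j = x then 1 else 0 : ℕ) = i then 1 else 0 : ℝ) ^ 2)
          ∂(Measure.pi fun _ : Fin n => μX))
        - ((n.choose i : ℝ) * (∑ x, p x ^ i * (1 - p x) ^ (n - i))) ^ 2 := by
  -- the product measure of a point
  have hmeas : ∀ ω : Fin n → X,
      (((Measure.pi fun _ : Fin n => μX)) {ω}).toReal = ∏ j, p (ω j) := by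
    intro ω
    rw [← Set.univ_pi_singleton ω, Measure.pi_pi, ENNReal.toReal_prod]
    exact Finset.prod_congr rfl fun j _ => hp (ω j)
  -- reduction of integrals to finite sums
  have hint : ∀ f : (Fin n → X) → ℝ,
      ∫ ω, f ω ∂(Measure.pi fun _ : Fin n => μX)
        = ∑ ω : Fin n → X, (∏ j, p (ω j)) * f ω := by
    intro f
    rw [integral_fintype (Integrable.of_finite)]
    exact Finset.sum_congr rfl fun ω _ => by rw [Measure.real, hmeas ω, smul_eq_mul]
  -- total mass one
  have sum_p : ∑ x : X, p x = 1 := by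
    have h1 : ∫ _ : X, (1 : ℝ) ∂μX = 1 := by simp
    rw [integral_fintype (Integrable.of_finite)] at h1
    simpa [Measure.real, hp] using h1
  have herase : ∀ x : X, ∑ y ∈ univ.erase x, p y = 1 - p x := by
    intro x
    rw [Finset.sum_erase_eq_sub (mem_univ x), sum_p]
  have herase2 : ∀ x y : X, y ≠ x → ∑ z ∈ (univ.erase x).erase y, p z = 1 - p x - p y := by
    intro x y hyx
    rw [Finset.sum_erase_eq_sub (mem_erase.2 ⟨hyx, mem_univ y⟩), herase x]
  -- the first moment
  have hEphi : ∫ ω, (∑ x : X, if (∑ j, if ω j = x then 1 else 0 : ℕ) = i then (1:ℝ) else 0)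
        ∂(Measure.pi fun _ : Fin n => μX)
      = (n.choose i : ℝ) * (∑ x, p x ^ i * (1 - p x) ^ (n - i)) := by
    rw [hint]
    rw [Finset.mul_sum]
    have : ∀ ω : Fin n → X, (∏ j, p (ω j))
          * (∑ x : X, if (∑ j, if ω j = x then 1 else 0 : ℕ) = i then (1:ℝ) else 0)
        = ∑ x : X, (if (∑ j, if ω j = x then 1 else 0 : ℕ) = i then (1:ℝ) else 0)
            * ∏ j, p (ω j) := by
      intro ω; rw [Finset.mul_sum]; exact Finset.sum_congr rfl fun x _ => by ring
    simp only [this]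
    rw [Finset.sum_comm]
    refine Finset.sum_congr rfl fun x _ => ?_
    rw [sm_A p x n i, herase x]
    ring
  -- the second moment, in raw form
  have hE2 : ∫ ω, ((∑ x : X, if (∑ j, if ω j = x then 1 else 0 : ℕ) = i then (1:ℝ) else 0) ^ 2)
        ∂(Measure.pi fun _ : Fin n => μX)
      = (n.choose i : ℝ) * (∑ x, p x ^ i * (1 - p x) ^ (n - i))
        + ∑ x : X, ∑ y ∈ univ.erase x,
            (n.choose i : ℝ) * ((n-i).choose i : ℝ) * p x ^ i * p y ^ i
              * (1 - p x - p y) ^ (n - i - i) := by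
    rw [hint]
    have expand : ∀ ω : Fin n → X,
        (∏ j, p (ω j)) * ((∑ x : X, if (∑ j, if ω j = x then 1 else 0 : ℕ) = i
              then (1:ℝ) else 0) ^ 2)
          = ∑ x : X, ∑ y : X,
              (if (∑ j, if ω j = x then 1 else 0 : ℕ) = i then (1:ℝ) else 0)
              * (if (∑ j, if ω j = y then 1 else 0 : ℕ) = i then (1:ℝ) else 0)
              * ∏ j, p (ω j) := by
      intro ω
      rw [sq, Finset.sum_mul_sum, Finset.mul_sum]
      refine Finset.sum_congr rfl fun x _ => ?_
      rw [Finset.mul_sum]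
      exact Finset.sum_congr rfl fun y _ => by ring
    simp only [expand]
    rw [Finset.sum_comm]
    have inner : ∀ x : X,
        (∑ ω : Fin n → X, ∑ y : X,
            (if (∑ j, if ω j = x then 1 else 0 : ℕ) = i then (1:ℝ) else 0)
            * (if (∑ j, if ω j = y then 1 else 0 : ℕ) = i then (1:ℝ) else 0)
            * ∏ j, p (ω j))
          = (n.choose i : ℝ) * p x ^ i * (1 - p x) ^ (n - i)
            + ∑ y ∈ univ.erase x,
                (n.choose i : ℝ) * ((n-i).choose i : ℝ) * p x ^ i * p y ^ i
                  * (1 - p x - p y) ^ (n - i - i) := by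
      intro x
      rw [Finset.sum_comm]
      rw [← Finset.add_sum_erase (univ) _ (mem_univ x)]
      congr 1
      · have sq_ind : ∀ ω : Fin n → X,
            (if (∑ j, if ω j = x then 1 else 0 : ℕ) = i then (1:ℝ) else 0)
              * (if (∑ j, if ω j = x then 1 else 0 : ℕ) = i then (1:ℝ) else 0)
            = (if (∑ j, if ω j = x then 1 else 0 : ℕ) = i then (1:ℝ) else 0) := by
          intro ω; split <;> simp
        simp only [sq_ind]
        rw [sm_A p x n i, herase x]
      · refine Finset.sum_congr rfl fun y hy => ?_
        have hyx : y ≠ x := Finset.ne_of_mem_erase hy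
        rw [sm_B p hyx n i i, herase2 x y hyx]
    simp only [inner]
    rw [Finset.sum_add_distrib, Finset.mul_sum]
    congr 1
    exact Finset.sum_congr rfl fun x _ => by ring
  refine ⟨fun h2i => ?_, fun h2i => ?_, ?_⟩
  · rw [hE2]
    congr 1
    refine Finset.sum_congr rfl fun x _ => Finset.sum_congr rfl fun y _ => ?_
    have hfact : (n.choose i : ℝ) * ((n-i).choose i : ℝ)
        = (n.factorial : ℝ) / ((i.factorial : ℝ) ^ 2 * ((n - 2*i).factorial : ℝ)) := by
      rw [Nat.cast_choose ℝ hin, Nat.cast_choose ℝ (show i ≤ n - i by omega)]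
      have h1 : n - i - i = n - 2 * i := by omega
      rw [h1]
      have f1 : (i.factorial : ℝ) ≠ 0 := Nat.cast_ne_zero.2 i.factorial_ne_zero
      have f2 : ((n-i).factorial : ℝ) ≠ 0 := Nat.cast_ne_zero.2 (n-i).factorial_ne_zero
      have f3 : ((n-2*i).factorial : ℝ) ≠ 0 := Nat.cast_ne_zero.2 (n-2*i).factorial_ne_zero
      field_simp
    have hexp : n - i - i = n - 2 * i := by omega
    rw [hexp, hfact]
  · rw [hE2]
    have hzero : ∀ x : X, ∀ y ∈ univ.erase x,
        (n.choose i : ℝ) * ((n-i).choose i : ℝ) * p x ^ i * p y ^ i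
          * (1 - p x - p y) ^ (n - i - i) = 0 := by
      intro x y _
      have : ((n-i).choose i : ℝ) = 0 := by
        norm_cast
        exact Nat.choose_eq_zero_of_lt (by omega)
      rw [this]; ring
    rw [Finset.sum_congr rfl fun x _ => Finset.sum_eq_zero (hzero x)]
    simp
  · have hmem : MemLp (fun ω : Fin n → X =>
        (∑ x : X, if (∑ j, if ω j = x then 1 else 0 : ℕ) = i then (1:ℝ) else 0)) 2
        (Measure.pi fun _ : Fin n => μX) := MemLp.of_discrete
    rw [variance_eq_sub hmem, ← hEphi]
    congr 1
end
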